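/- Let S be an additively reduced semidomain and G a torsion-free abelian group. An element f = ∑_{i=0}^n s_i x^{g_i} of S[G] with at least two nonzero terms is irreducible (in the multiplicative monoid of nonzero elements of S[G]) if and only if f is monolithic and 1 is a greatest common divisor of the coefficients s_0,…,s_n in S. -/

import Mathlib

/-- Witness that `S` is a semidomain: an injective semiring hom into an integral domain. -/
structure SemidomainWitness (S : Type*) [CommSemiring S] where
  D : Type
  [commRing : CommRing D]
  [isDomain : IsDomain D]
  emb : S →+* D
  inj : Function.Injective emb

/-- `S` is a semidomain, i.e. (isomorphic to) a subsemiring of an integral domain. -/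
def IsSemidomain (S : Type*) [CommSemiring S] : Prop := Nonempty (SemidomainWitness S)

/-- `S` is additively reduced: `0` is the only additively invertible element. -/
def AddReduced (S : Type*) [AddZeroClass S] : Prop := ∀ a b : S, a + b = 0 → a = 0

/-- `s` is an atom of the additive monoid `(S, +)` (for `S` additively reduced):
it is nonzero and cannot be written as a sum of two nonzero elements. -/
def IsAddAtom {S : Type*} [AddZeroClass S] (s : S) : Prop :=
  s ≠ 0 ∧ ∀ a b : S, s = a + b → a = 0 ∨ b = 0

/-- `S` is additively Furstenberg: every nonzero element is divisible in `(S, +)`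
by an additive atom. -/
def AddFurstenberg (S : Type*) [AddZeroClass S] : Prop :=
  ∀ s : S, s ≠ 0 → ∃ a t : S, IsAddAtom a ∧ s = a + t


section GroupAlg
variable {S : Type*} [CommSemiring S] {G : Type*} [AddCommGroup G]

/-- A monomial `s·x^g` in the group semidomain `S[G]`. -/
def IsMonomial (f : AddMonoidAlgebra S G) : Prop :=
  ∃ (g : G) (s : S), f = AddMonoidAlgebra.single g s

/-- `f` is monolithic: every factorization of `f` in `S[G]` has a monomial factor. -/
def Monolithic (f : AddMonoidAlgebra S G) : Prop :=
  f ≠ 0 ∧ ∀ p q : AddMonoidAlgebra S G, f = p * q → IsMonomial p ∨ IsMonomial q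

end GroupAlg

/-- Torsion-free abelian groups have the `TwoUniqueSums` property. -/
lemma aux_twoUniqueSums {G : Type*} [AddCommGroup G]
    (htf : ∀ (g : G) (n : ℕ), n ≠ 0 → n • g = 0 → g = 0) : TwoUniqueSums G where
  uniqueAdd_of_one_lt_card {A B} hc := by
    classical
    set H : AddSubgroup G := AddSubgroup.closure ((A ∪ B : Finset G) : Set G) with hHdef
    haveI hfg : AddGroup.FG H := (AddGroup.fg_iff_addSubgroup_fg H).mpr ⟨A ∪ B, rfl⟩
    haveI : Module.Finite ℤ H := Module.Finite.iff_addGroup_fg.mpr hfg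
    haveI : NoZeroSMulDivisors ℤ H := by
      constructor
      intro c x hcx
      rcases eq_or_ne c 0 with hc0 | hc0
      · exact Or.inl hc0
      · refine Or.inr ?_
        have hG : c • (x : G) = 0 := by
          have := congrArg (fun y : H => (y : G)) hcx
          simpa using this
        have hnat : c.natAbs • (x : G) = 0 := by
          have h2 : (c.natAbs : ℤ) • (x : G) = 0 := by
            rcases Int.natAbs_eq c with h | h
            · rw [← h]; exact hG
            · have he : (c.natAbs : ℤ) = -c := by omega
              rw [he, neg_smul, hG, neg_zero]
          simpa [natCast_zsmul] using h2
        have : (x : G) = 0 := htf _ _ (Int.natAbs_ne_zero.mpr hc0) hnat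
        exact Subtype.ext this
    haveI : Module.Free ℤ H := Module.free_of_finite_type_torsion_free'
    haveI : TwoUniqueSums H := by
      let b := Module.Free.chooseBasis ℤ H
      exact TwoUniqueSums.of_injective_addHom b.repr.toLinearMap.toAddMonoidHom.toAddHom
        b.repr.injective inferInstance
    have hA : ∀ a ∈ A, a ∈ H := fun a ha =>
      AddSubgroup.subset_closure (by simp [Finset.mem_union, ha])
    have hB : ∀ b ∈ B, b ∈ H := fun b hb =>
      AddSubgroup.subset_closure (by simp [Finset.mem_union, hb])
    let A' : Finset H := A.subtype (· ∈ H)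
    let B' : Finset H := B.subtype (· ∈ H)
    have cardA : A'.card = A.card := by
      conv_rhs => rw [← Finset.subtype_map_of_mem hA]
      rw [Finset.card_map]
    have cardB : B'.card = B.card := by
      conv_rhs => rw [← Finset.subtype_map_of_mem hB]
      rw [Finset.card_map]
    have hc' : 1 < A'.card * B'.card := by rw [cardA, cardB]; exact hc
    obtain ⟨p1, hp1, p2, hp2, hne, h1, h2⟩ := TwoUniqueSums.uniqueAdd_of_one_lt_card hc'
    rw [Finset.mem_product] at hp1 hp2
    have transfer : ∀ x : H × H, x.1 ∈ A' → x.2 ∈ B' → UniqueAdd A' B' x.1 x.2 →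
        UniqueAdd A B (x.1 : G) (x.2 : G) := by
      intro x _ _ hu a b ha hb hab
      have ha' : (⟨a, hA a ha⟩ : H) ∈ A' := Finset.mem_subtype.mpr ha
      have hb' : (⟨b, hB b hb⟩ : H) ∈ B' := Finset.mem_subtype.mpr hb
      have h := hu ha' hb' (Subtype.ext (by simpa using hab))
      exact ⟨congrArg Subtype.val h.1, congrArg Subtype.val h.2⟩
    refine ⟨((p1.1 : G), (p1.2 : G)), ?_, ((p2.1 : G), (p2.2 : G)), ?_, ?_, ?_, ?_⟩
    · exact Finset.mem_product.mpr ⟨Finset.mem_subtype.mp hp1.1, Finset.mem_subtype.mp hp1.2⟩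
    · exact Finset.mem_product.mpr ⟨Finset.mem_subtype.mp hp2.1, Finset.mem_subtype.mp hp2.2⟩
    · intro h
      apply hne
      have h1' := congrArg Prod.fst h
      have h2' := congrArg Prod.snd h
      exact Prod.ext (Subtype.ext h1') (Subtype.ext h2')
    · exact transfer p1 hp1.1 hp1.2 h1
    · exact transfer p2 hp2.1 hp2.2 h2

/-- In `S[G]` with `S` a no-zero-divisor semiring and `G` with two unique sums,
a factorization of a monomial has monomial factors. -/
lemma aux_monomial_factors {S : Type*} [CommSemiring S] [NoZeroDivisors S]
    {G : Type*} [AddCommGroup G] [TwoUniqueSums G]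
    {p q : AddMonoidAlgebra S G} (hmono : IsMonomial (p * q))
    (hp : p ≠ 0) (hq : q ≠ 0) : IsMonomial p ∧ IsMonomial q := by
  classical
  obtain ⟨k, c, hkc⟩ := hmono
  have hsupp : (p * q).coeff.support ⊆ {k} := by
    rw [hkc]; exact Finsupp.support_single_subset
  have hcards : p.coeff.support.card = 1 ∧ q.coeff.support.card = 1 := by
    by_contra hcon
    have hpc : 1 ≤ p.coeff.support.card :=
        Finset.card_pos.mpr (Finsupp.support_nonempty_iff.mpr (fun h => hp (AddMonoidAlgebra.coeff_eq_zero.mp h)))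
    have hqc : 1 ≤ q.coeff.support.card :=
        Finset.card_pos.mpr (Finsupp.support_nonempty_iff.mpr (fun h => hq (AddMonoidAlgebra.coeff_eq_zero.mp h)))
    have hlt : 1 < p.coeff.support.card * q.coeff.support.card := by
      rcases Nat.lt_or_ge 1 (p.coeff.support.card * q.coeff.support.card) with h | h
      · exact h
      · exfalso; apply hcon; constructor <;> nlinarith
    obtain ⟨p1, hp1, p2, hp2, hne, h1, h2⟩ := TwoUniqueSums.uniqueAdd_of_one_lt_card hlt
    rw [Finset.mem_product] at hp1 hp2
    have m1 : (p1.1 + p1.2) ∈ (p * q).coeff.support := by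
      rw [Finsupp.mem_support_iff, AddMonoidAlgebra.coeff_mul_add_of_uniqueAdd h1]
      exact mul_ne_zero (Finsupp.mem_support_iff.mp hp1.1) (Finsupp.mem_support_iff.mp hp1.2)
    have m2 : (p2.1 + p2.2) ∈ (p * q).coeff.support := by
      rw [Finsupp.mem_support_iff, AddMonoidAlgebra.coeff_mul_add_of_uniqueAdd h2]
      exact mul_ne_zero (Finsupp.mem_support_iff.mp hp2.1) (Finsupp.mem_support_iff.mp hp2.2)
    have e1 : p1.1 + p1.2 = k := Finset.mem_singleton.mp (hsupp m1)
    have e2 : p2.1 + p2.2 = k := Finset.mem_singleton.mp (hsupp m2)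
    have := h1 hp2.1 hp2.2 (by rw [e1, e2])
    exact hne (Prod.ext this.1 this.2).symm
  obtain ⟨a, sa, _, hpa⟩ := Finsupp.card_support_eq_one'.mp hcards.1
  obtain ⟨b, sb, _, hqb⟩ := Finsupp.card_support_eq_one'.mp hcards.2
  exact ⟨⟨a, sa, AddMonoidAlgebra.coeff_injective hpa⟩, ⟨b, sb, AddMonoidAlgebra.coeff_injective hqb⟩⟩

/-- Units of `S[G]` are monomials with unit coefficient. -/
lemma aux_unit_monomial {S : Type*} [CommSemiring S] [NoZeroDivisors S] (h1 : (1 : S) ≠ 0)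
    {G : Type*} [AddCommGroup G] [TwoUniqueSums G]
    {p : AddMonoidAlgebra S G} (hp : IsUnit p) :
    ∃ (a : G) (u : S), IsUnit u ∧ p = AddMonoidAlgebra.single a u := by
  obtain ⟨q, hq⟩ := hp.exists_right_inv
  have hone : (1 : AddMonoidAlgebra S G) = AddMonoidAlgebra.single 0 1 :=
    AddMonoidAlgebra.one_def
  have hmono : IsMonomial (p * q) := ⟨0, 1, by rw [hq, hone]⟩
  haveI : Nontrivial S := ⟨1, 0, h1⟩
  have hone0 : (1 : AddMonoidAlgebra S G) ≠ 0 := by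
    rw [hone]; exact fun h => one_ne_zero (AddMonoidAlgebra.single_eq_zero.mp h)
  have hpq0 : p ≠ 0 ∧ q ≠ 0 := by
    constructor <;> rintro rfl
    · rw [zero_mul] at hq; exact hone0 hq.symm
    · rw [mul_zero] at hq; exact hone0 hq.symm
  obtain ⟨⟨a, sa, hpa⟩, ⟨b, sb, hqb⟩⟩ := aux_monomial_factors hmono hpq0.1 hpq0.2
  rw [hpa, hqb, AddMonoidAlgebra.single_mul_single, hone] at hq
  rcases AddMonoidAlgebra.single_inj.mp hq with ⟨_, h⟩ | ⟨h, h'⟩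
  · exact ⟨a, sa, IsUnit.of_mul_eq_one _ h, hpa⟩
  · exact absurd h' h1

/-- An element of `S[G]` with at least two terms is irreducible iff it is monolithic and
`1` is a gcd of its coefficients (i.e. every common divisor of the coefficients is a unit). -/
theorem irreducible_iff_monolithic_and_gcd_one
    {S : Type*} [CommSemiring S] {G : Type*} [AddCommGroup G]
    (hS : IsSemidomain S) (hred : AddReduced S)
    (htf : ∀ (g : G) (n : ℕ), n ≠ 0 → n • g = 0 → g = 0)
    (n : ℕ) (hn : 1 ≤ n) (s : Fin (n + 1) → S) (g : Fin (n + 1) → G)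
    (hs : ∀ i, s i ≠ 0) (hg : Function.Injective g)
    (f : AddMonoidAlgebra S G)
    (hf : f = ∑ i, AddMonoidAlgebra.single (g i) (s i)) :
    Irreducible f ↔ Monolithic f ∧ ∀ t : S, (∀ i, t ∣ s i) → IsUnit t := by
  classical
  obtain ⟨W⟩ := hS
  letI := W.commRing
  letI := W.isDomain
  haveI hnzd : NoZeroDivisors S := ⟨by
    intro a b hab
    have h := congrArg W.emb hab
    rw [map_mul, map_zero] at h
    rcases mul_eq_zero.mp h with h | h
    · exact Or.inl (W.inj (by rw [h, map_zero]))
    · exact Or.inr (W.inj (by rw [h, map_zero]))⟩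
  haveI : TwoUniqueSums G := aux_twoUniqueSums htf
  set i0 : Fin (n + 1) := ⟨0, by omega⟩ with hi0
  set i1 : Fin (n + 1) := ⟨1, by omega⟩ with hi1
  have h1 : (1 : S) ≠ 0 := fun h => hs i0 (by rw [← mul_one (s i0), h, mul_zero])
  have hcoeff : ∀ (c : Fin (n + 1) → S) (j : Fin (n + 1)),
      (∑ i, AddMonoidAlgebra.single (g i) (c i)).coeff (g j) = c j := by
    intro c j
    rw [AddMonoidAlgebra.coeff_sum, Finsupp.finset_sum_apply]
    rw [Finset.sum_eq_single j]
    · rw [AddMonoidAlgebra.coeff_single_apply, if_pos rfl]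
    · intro i _ hij
      rw [AddMonoidAlgebra.coeff_single_apply, if_neg (fun h => hij (hg h))]
    · intro h; exact absurd (Finset.mem_univ j) h
  have hnotmono : ∀ c : Fin (n + 1) → S, (∀ i, c i ≠ 0) →
      ¬IsMonomial (∑ i, AddMonoidAlgebra.single (g i) (c i)) := by
    rintro c hc ⟨k, t, hk⟩
    have key : ∀ j : Fin (n + 1), g j = k := by
      intro j
      have hj := hcoeff c j
      rw [hk] at hj
      by_contra hne
      rw [AddMonoidAlgebra.coeff_single_apply, if_neg (fun h => hne h.symm)] at hj
      exact hc j hj.symm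
    have : g i0 = g i1 := by rw [key i0, key i1]
    have h01 : i0 = i1 := hg this
    have := congrArg Fin.val h01
    simp [hi0, hi1] at this
  have hf0 : f ≠ 0 := by
    intro h
    apply hs i0
    have := hcoeff s i0
    rw [← hf, h] at this
    exact this.symm
  constructor
  · intro hirr
    refine ⟨⟨hf0, ?_⟩, ?_⟩
    · intro p q hpq
      rcases hirr.isUnit_or_isUnit hpq with h | h
      · obtain ⟨a, u, _, hp⟩ := aux_unit_monomial h1 h
        exact Or.inl ⟨a, u, hp⟩
      · obtain ⟨a, u, _, hp⟩ := aux_unit_monomial h1 h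
        exact Or.inr ⟨a, u, hp⟩
    · intro t ht
      choose c hc using fun i => ht i
      have hfact : f = AddMonoidAlgebra.single (0 : G) t *
          ∑ i, AddMonoidAlgebra.single (g i) (c i) := by
        rw [hf, Finset.mul_sum]
        refine Finset.sum_congr rfl fun i _ => ?_
        rw [AddMonoidAlgebra.single_mul_single, zero_add, ← hc i]
      rcases hirr.isUnit_or_isUnit hfact with h | h
      · obtain ⟨q, hq⟩ := h.exists_right_inv
        have hc0 := congrArg (fun r : AddMonoidAlgebra S G => r.coeff 0) hq
        simp only [AddMonoidAlgebra.coeff_single_mul_apply, neg_zero, zero_add,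
          AddMonoidAlgebra.one_def] at hc0
        rw [AddMonoidAlgebra.coeff_single_apply, if_pos rfl] at hc0
        exact IsUnit.of_mul_eq_one _ hc0
      · exfalso
        have hc0 : ∀ i, c i ≠ 0 := fun i h0 => hs i (by rw [hc i, h0, mul_zero])
        obtain ⟨a, u, _, hmq⟩ := aux_unit_monomial h1 h
        exact hnotmono c hc0 ⟨a, u, hmq⟩
  · rintro ⟨⟨_, hmono⟩, hgcd⟩
    rw [irreducible_iff]
    constructor
    · intro hu
      obtain ⟨a, u, _, hfm⟩ := aux_unit_monomial h1 hu
      exact hnotmono s hs (by rw [← hf]; exact ⟨a, u, hfm⟩)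
    · intro p q hpq
      rcases hmono p q hpq with hm | hm
      · left
        obtain ⟨b, t, rfl⟩ := hm
        have hdvd : ∀ i, t ∣ s i := by
          intro i
          have hi := hcoeff s i
          rw [← hf, hpq, AddMonoidAlgebra.coeff_single_mul_apply] at hi
          exact Dvd.intro _ hi
        obtain ⟨w, hw⟩ := (hgcd t hdvd).exists_right_inv
        refine IsUnit.of_mul_eq_one (AddMonoidAlgebra.single (-b) w) ?_
        rw [AddMonoidAlgebra.single_mul_single, add_neg_cancel, hw, AddMonoidAlgebra.one_def]
      · right
        obtain ⟨b, t, rfl⟩ := hm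
        have hdvd : ∀ i, t ∣ s i := by
          intro i
          have hi := hcoeff s i
          rw [← hf, hpq, AddMonoidAlgebra.coeff_mul_single_apply] at hi
          exact Dvd.intro_left _ hi
        obtain ⟨w, hw⟩ := (hgcd t hdvd).exists_right_inv
        refine IsUnit.of_mul_eq_one (AddMonoidAlgebra.single (-b) w) ?_
        rw [AddMonoidAlgebra.single_mul_single, add_neg_cancel, hw, AddMonoidAlgebra.one_def]
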